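/- Let T be a spanning tree of a connected graph G with positive vertex populations and ideal population I = pop(G)/k. If T has exactly k−1 valid cut edges (edges whose removal splits T into two subtrees whose populations are both integer multiples of I), then removing all k−1 valid cut edges from T yields exactly k connected components, each with population exactly I. -/

import Mathlib

open scoped Classical

/-- Total population of a vertex subset. -/
noncomputable def popSet {V : Type*} [Fintype V] (pop : V → ℕ) (s : Set V) : ℕ :=
  ∑ v ∈ Finset.univ, if v ∈ s then pop v else 0

/-- `e` is a valid cut edge of the tree `T`: it is an edge of `T`, and after deleting it,
every connected component has population a positive integer multiple of `I`. -/
def ValidCut {V : Type*} [Fintype V] (T : SimpleGraph V) (pop : V → ℕ) (I : ℕ)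
    (e : Sym2 V) : Prop :=
  e ∈ T.edgeSet ∧
    ∀ c : (T.deleteEdges {e}).ConnectedComponent,
      ∃ m : ℕ, 1 ≤ m ∧ popSet pop c.supp = m * I

open SimpleGraph

lemma walk_avoid {V : Type*} (T : SimpleGraph V) (S : Set (Sym2 V)) (a b : V) :
    ∀ {u v : V} (_ : (T.deleteEdges S).Walk u v),
      ¬(T.deleteEdges (insert s(a, b) S)).Reachable u a →
      ¬(T.deleteEdges (insert s(a, b) S)).Reachable u b →
      (T.deleteEdges (insert s(a, b) S)).Reachable u v := by
  intro u v p
  induction p with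
  | nil => intro _ _; exact Reachable.refl _
  | @cons u w v h q ih =>
    intro hua hub
    rw [SimpleGraph.deleteEdges_adj] at h
    have hne : s(u, w) ≠ s(a, b) := by
      intro hEq
      rcases Sym2.eq_iff.mp hEq with ⟨rfl, rfl⟩ | ⟨rfl, rfl⟩
      · exact hua (Reachable.refl _)
      · exact hub (Reachable.refl _)
    have hD : (T.deleteEdges (insert s(a, b) S)).Adj u w := by
      rw [SimpleGraph.deleteEdges_adj]
      exact ⟨h.1, by simp [Set.mem_insert_iff, hne, h.2]⟩
    have hwa : ¬(T.deleteEdges (insert s(a, b) S)).Reachable w a :=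
      fun hr => hua (hD.reachable.trans hr)
    have hwb : ¬(T.deleteEdges (insert s(a, b) S)).Reachable w b :=
      fun hr => hub (hD.reachable.trans hr)
    exact hD.reachable.trans (ih hwa hwb)

lemma reach_avoid {V : Type*} (T : SimpleGraph V) (S : Set (Sym2 V)) (a b u v : V)
    (hua : ¬(T.deleteEdges (insert s(a, b) S)).Reachable u a)
    (hub : ¬(T.deleteEdges (insert s(a, b) S)).Reachable u b)
    (h : (T.deleteEdges S).Reachable u v) :
    (T.deleteEdges (insert s(a, b) S)).Reachable u v := by
  obtain ⟨p⟩ := h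
  exact walk_avoid T S a b p hua hub

lemma frozen_supp {V : Type*} (T : SimpleGraph V) (S : Set (Sym2 V)) (a b u : V)
    (hua : ¬(T.deleteEdges (insert s(a, b) S)).Reachable u a)
    (hub : ¬(T.deleteEdges (insert s(a, b) S)).Reachable u b) :
    ((T.deleteEdges (insert s(a, b) S)).connectedComponentMk u).supp
      = ((T.deleteEdges S).connectedComponentMk u).supp := by
  ext w
  simp only [ConnectedComponent.mem_supp_iff, ConnectedComponent.eq]
  constructor
  · exact fun h => h.mono (SimpleGraph.deleteEdges_anti (Set.subset_insert _ _))
  · intro h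
    exact (reach_avoid T S a b u w hua hub h.symm).symm

lemma sum_comp {V : Type*} [Fintype V] (H : SimpleGraph V) (pop : V → ℕ) (A : Set V)
    (hA : ∀ v ∈ A, ∀ w, H.Reachable w v → w ∈ A) :
    popSet pop A = ∑ c ∈ Finset.univ.filter (fun c : H.ConnectedComponent => c.supp ⊆ A),
      popSet pop c.supp := by
  have swap : ∀ c : H.ConnectedComponent,
      (if c.supp ⊆ A then popSet pop c.supp else 0)
        = ∑ v ∈ Finset.univ, (if c.supp ⊆ A then (if v ∈ c.supp then pop v else 0) else 0) := by
    intro c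
    by_cases h : c.supp ⊆ A
    · simp only [h, if_true]
      unfold popSet
      refine Finset.sum_congr rfl fun v _ => ?_
      by_cases hv : v ∈ c.supp <;> simp [hv]
    · simp [h]
  have key : ∀ v : V, ∀ c : H.ConnectedComponent,
      (if c.supp ⊆ A then (if v ∈ c.supp then pop v else 0) else 0)
        = if c = H.connectedComponentMk v then (if v ∈ A then pop v else 0) else 0 := by
    intro v c
    have hv : v ∈ (H.connectedComponentMk v).supp := by
      simp [ConnectedComponent.mem_supp_iff]
    by_cases hc : c = H.connectedComponentMk v
    · subst hc
      have hiff : (H.connectedComponentMk v).supp ⊆ A ↔ v ∈ A := by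
        constructor
        · exact fun h => h hv
        · intro hvA w hw
          rw [ConnectedComponent.mem_supp_iff, ConnectedComponent.eq] at hw
          exact hA v hvA w hw
      by_cases hvA : v ∈ A
      · simp [hiff.mpr hvA, hv, hvA]
      · have hsub : ¬ (H.connectedComponentMk v).supp ⊆ A := fun h => hvA (hiff.mp h)
        simp [hsub, hvA]
    · have hns : v ∉ c.supp := by
        rw [ConnectedComponent.mem_supp_iff]
        exact fun h => hc h.symm
      simp [hns, hc]
  calc popSet pop A = ∑ v ∈ Finset.univ, (if v ∈ A then pop v else 0) := rfl
    _ = ∑ v ∈ Finset.univ, ∑ c ∈ Finset.univ,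
        (if c = H.connectedComponentMk v then (if v ∈ A then pop v else 0) else 0) := by
        refine Finset.sum_congr rfl fun v _ => ?_
        rw [Finset.sum_ite_eq' Finset.univ (H.connectedComponentMk v)]
        simp
    _ = ∑ c ∈ Finset.univ, ∑ v ∈ Finset.univ,
        (if c.supp ⊆ A then (if v ∈ c.supp then pop v else 0) else 0) := by
        rw [Finset.sum_comm]
        exact Finset.sum_congr rfl fun c _ => Finset.sum_congr rfl fun v _ => (key v c).symm
    _ = ∑ c ∈ Finset.univ, (if c.supp ⊆ A then popSet pop c.supp else 0) :=
        (Finset.sum_congr rfl fun c _ => (swap c).symm)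
    _ = _ := (Finset.sum_filter _ _).symm

lemma key_step {V : Type*} [Fintype V] (T : SimpleGraph V) (pop : V → ℕ) (I : ℕ)
    (S : Set (Sym2 V)) (a b : V)
    (hbridge : ¬(T.deleteEdges {s(a, b)}).Reachable a b)
    (hvalid : ValidCut T pop I s(a, b))
    (IH : ∀ c : (T.deleteEdges S).ConnectedComponent, I ∣ popSet pop c.supp) :
    I ∣ popSet pop ((T.deleteEdges (insert s(a, b) S)).connectedComponentMk a).supp := by
  set D := T.deleteEdges (insert s(a, b) S) with hD
  set E1 := T.deleteEdges {s(a, b)} with hE1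
  have hDE : D ≤ E1 := by
    rw [hD, hE1]
    exact SimpleGraph.deleteEdges_anti (by intro x hx; simp at hx; simp [hx])
  set A := (E1.connectedComponentMk a).supp with hA
  -- A is closed under reachability in D
  have hclosed : ∀ v ∈ A, ∀ w, D.Reachable w v → w ∈ A := by
    intro v hv w hw
    rw [hA, ConnectedComponent.mem_supp_iff] at hv ⊢
    rw [← hv, ConnectedComponent.eq]
    exact (hw.mono hDE)
  have hsum := sum_comp D pop A hclosed
  -- popSet A is divisible by I
  have hdvdA : I ∣ popSet pop A := by
    obtain ⟨m, _, hm⟩ := hvalid.2 (E1.connectedComponentMk a)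
    exact ⟨m, by rw [hA, hm, Nat.mul_comm]⟩
  -- the D-component of a belongs to the filter
  have hmem : D.connectedComponentMk a ∈
      Finset.univ.filter (fun c : D.ConnectedComponent => c.supp ⊆ A) := by
    rw [Finset.mem_filter]
    refine ⟨Finset.mem_univ _, fun w hw => ?_⟩
    rw [ConnectedComponent.mem_supp_iff, ConnectedComponent.eq] at hw
    rw [hA, ConnectedComponent.mem_supp_iff, ConnectedComponent.eq]
    exact hw.mono hDE
  -- every other component in the filter has popSet divisible by I
  have hothers : ∀ c ∈ (Finset.univ.filter
      (fun c : D.ConnectedComponent => c.supp ⊆ A)).erase (D.connectedComponentMk a),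
      I ∣ popSet pop c.supp := by
    intro c hc
    rw [Finset.mem_erase, Finset.mem_filter] at hc
    obtain ⟨hne, _, hsub⟩ := hc
    induction c using SimpleGraph.ConnectedComponent.ind with
    | _ u =>
      have hua : ¬ D.Reachable u a := by
        intro hr
        exact hne (ConnectedComponent.eq.mpr hr)
      have hub : ¬ D.Reachable u b := by
        intro hr
        have hb' : b ∈ (D.connectedComponentMk u).supp := by
          rw [ConnectedComponent.mem_supp_iff, ConnectedComponent.eq]
          exact hr.symm
        have hbA : b ∈ A := hsub hb'
        rw [hA, ConnectedComponent.mem_supp_iff, ConnectedComponent.eq] at hbA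
        exact hbridge hbA.symm
      rw [hD, frozen_supp T S a b u hua hub]
      exact IH _
  have herase : I ∣ ∑ c ∈ (Finset.univ.filter
      (fun c : D.ConnectedComponent => c.supp ⊆ A)).erase (D.connectedComponentMk a),
      popSet pop c.supp := Finset.dvd_sum hothers
  have hsplit := Finset.add_sum_erase _ (fun c : D.ConnectedComponent => popSet pop c.supp) hmem
  have hsum : popSet pop A = popSet pop (D.connectedComponentMk a).supp + ∑ c ∈ (Finset.univ.filter
      (fun c : D.ConnectedComponent => c.supp ⊆ A)).erase (D.connectedComponentMk a),
      popSet pop c.supp := by rw [hsum]; convert hsplit.symm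
  have := Nat.dvd_sub hdvdA herase
  rwa [hsum, Nat.add_sub_cancel] at this

-- every edge of a tree is a bridge
lemma tree_bridge {V : Type*} (T : SimpleGraph V) (hTree : T.IsTree) (a b : V)
    (hab : T.Adj a b) : ¬(T.deleteEdges {s(a, b)}).Reachable a b := by
  have hb := (isAcyclic_iff_forall_edge_isBridge.mp hTree.IsAcyclic)
    (T.mem_edgeSet.mpr hab)
  rw [isBridge_iff] at hb
  exact hb

lemma pop_dvd {V : Type*} [Fintype V] (T : SimpleGraph V) (pop : V → ℕ) (I : ℕ)
    (hTree : T.IsTree) (hIu : I ∣ popSet pop Set.univ) :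
    ∀ S : Finset (Sym2 V), (∀ e ∈ S, ValidCut T pop I e) →
      ∀ c : (T.deleteEdges ↑S).ConnectedComponent, I ∣ popSet pop c.supp := by
  intro S
  induction S using Finset.induction_on with
  | empty =>
    intro _ c
    have : c.supp = Set.univ := by
      ext w
      simp only [Set.mem_univ, iff_true]
      induction c using SimpleGraph.ConnectedComponent.ind with
      | _ v =>
        rw [ConnectedComponent.mem_supp_iff, ConnectedComponent.eq]
        simp only [Finset.coe_empty, SimpleGraph.deleteEdges_empty]
        exact hTree.isConnected.preconnected w v
    rw [this]
    exact hIu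
  | @insert e S he ih =>
    intro hcuts
    have hcutse : ValidCut T pop I e := hcuts e (Finset.mem_insert_self e S)
    have hcutsS : ∀ e' ∈ S, ValidCut T pop I e' :=
      fun e' h => hcuts e' (Finset.mem_insert_of_mem h)
    have IH := ih hcutsS
    induction e using Sym2.ind with
    | _ a b =>
      have hab : T.Adj a b := T.mem_edgeSet.mp hcutse.1
      have hbridge : ¬(T.deleteEdges {s(a, b)}).Reachable a b :=
        tree_bridge T hTree a b hab
      have hcoe : (↑(insert s(a, b) S) : Set (Sym2 V)) = insert s(a, b) (↑S : Set (Sym2 V)) :=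
        Finset.coe_insert _ _
      rw [hcoe]
      intro c
      induction c using SimpleGraph.ConnectedComponent.ind with
      | _ u =>
        by_cases hua : (T.deleteEdges (insert s(a, b) (↑S : Set (Sym2 V)))).Reachable u a
        · rw [ConnectedComponent.eq.mpr hua]
          exact key_step T pop I (↑S) a b hbridge hcutse IH
        · by_cases hub : (T.deleteEdges (insert s(a, b) (↑S : Set (Sym2 V)))).Reachable u b
          · rw [ConnectedComponent.eq.mpr hub]
            have hswap : s(a, b) = s(b, a) := Sym2.eq_swap
            have hbridge' : ¬(T.deleteEdges {s(b, a)}).Reachable b a := by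
              rw [← hswap]
              exact fun h => hbridge h.symm
            have hcutse' : ValidCut T pop I s(b, a) := by rwa [← hswap]
            have := key_step T pop I (↑S) b a hbridge' hcutse' IH
            rwa [hswap]
          · rw [frozen_supp T (↑S) a b u hua hub]
            exact IH _

lemma card_comp_ge {V : Type*} [Fintype V] (T : SimpleGraph V) (hTree : T.IsTree) :
    ∀ S : Finset (Sym2 V), (∀ e ∈ S, e ∈ T.edgeSet) →
      S.card + 1 ≤ Fintype.card (T.deleteEdges ↑S).ConnectedComponent := by
  intro S
  induction S using Finset.induction_on with
  | empty =>
    intro _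
    simp only [Finset.card_empty, zero_add]
    have : Nonempty V := hTree.isConnected.nonempty
    obtain ⟨v⟩ := this
    exact Fintype.card_pos_iff.mpr ⟨(T.deleteEdges _).connectedComponentMk v⟩
  | @insert e S he ih =>
    intro hedges
    have hme : e ∈ T.edgeSet := hedges e (Finset.mem_insert_self e S)
    have hS : ∀ e' ∈ S, e' ∈ T.edgeSet := fun e' h => hedges e' (Finset.mem_insert_of_mem h)
    have hcard := ih hS
    induction e using Sym2.ind with
    | _ a b =>
      have hab : T.Adj a b := T.mem_edgeSet.mp hme
      rw [Finset.card_insert_of_notMem he]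
      have hcoe : (↑(insert s(a, b) S) : Set (Sym2 V)) = insert s(a, b) (↑S : Set (Sym2 V)) :=
        Finset.coe_insert _ _
      simp only [hcoe]
      set D := T.deleteEdges (insert s(a, b) (↑S : Set (Sym2 V))) with hD
      set D0 := T.deleteEdges (↑S : Set (Sym2 V)) with hD0
      have hle : D ≤ D0 := SimpleGraph.deleteEdges_anti (Set.subset_insert _ _)
      let φ : D.ConnectedComponent → D0.ConnectedComponent :=
        SimpleGraph.ConnectedComponent.map (SimpleGraph.Hom.ofLE hle)
    -- φ maps mk v to mk v
      have hφ : ∀ v, φ (D.connectedComponentMk v) = D0.connectedComponentMk v := by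
        intro v
        simp [φ, SimpleGraph.ConnectedComponent.map_mk]
      have hsurj : Function.Surjective φ := by
        intro c
        induction c using SimpleGraph.ConnectedComponent.ind with
        | _ v => exact ⟨D.connectedComponentMk v, hφ v⟩
      have hninj : ¬ Function.Injective φ := by
        intro hinj
        have heq : φ (D.connectedComponentMk a) = φ (D.connectedComponentMk b) := by
          rw [hφ, hφ]
          exact ConnectedComponent.eq.mpr
            (SimpleGraph.Adj.reachable (by
              rw [hD0, SimpleGraph.deleteEdges_adj]
              exact ⟨hab, by simpa using he⟩))
        have := hinj heq
        rw [ConnectedComponent.eq] at this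
        have hbr := tree_bridge T hTree a b hab
        have hmono : D ≤ T.deleteEdges {s(a, b)} := by
          rw [hD]
          exact SimpleGraph.deleteEdges_anti (by intro x hx; simp at hx; simp [hx])
        exact hbr (this.mono hmono)
      have hlecard : Fintype.card D0.ConnectedComponent ≤ Fintype.card D.ConnectedComponent :=
        Fintype.card_le_of_surjective φ hsurj
      have hne : Fintype.card D0.ConnectedComponent ≠ Fintype.card D.ConnectedComponent := by
        intro hEq
        exact hninj ((Fintype.bijective_iff_surjective_and_card φ).mpr ⟨hsurj, hEq.symm⟩).1
      have h1 : Fintype.card (T.deleteEdges (insert s(a, b) (↑S : Set (Sym2 V)))).ConnectedComponent = Fintype.card D.ConnectedComponent := Fintype.card_congr (Equiv.refl _)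
      have h2 : Fintype.card (T.deleteEdges (↑S : Set (Sym2 V))).ConnectedComponent = Fintype.card D0.ConnectedComponent := Fintype.card_congr (Equiv.refl _)
      omega

lemma single_le_popSet {V : Type*} [Fintype V] (pop : V → ℕ) (s : Set V) (v : V)
    (hv : v ∈ s) : pop v ≤ popSet pop s := by
  unfold popSet
  have := Finset.single_le_sum (f := fun w => if w ∈ s then pop w else 0)
    (fun i _ => Nat.zero_le _) (Finset.mem_univ v)
  simpa [hv] using this

/-- If a spanning tree `T` of a connected graph `G` has exactly `k-1` valid cut edges,
then removing all of them yields exactly `k` connected components, each of population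
exactly `I`. -/
theorem removing_all_validCuts {V : Type*} [Fintype V]
    (G T : SimpleGraph V) (pop : V → ℕ)
    (hpos : ∀ v, 0 < pop v) (hG : G.Connected) (hT : T ≤ G) (hTree : T.IsTree)
    (k I : ℕ) (hk : 1 ≤ k) (hI : popSet pop Set.univ = k * I)
    (hcount : ((Finset.univ : Finset (Sym2 V)).filter
        (fun e => ValidCut T pop I e)).card = k - 1) :
    Fintype.card ((T.deleteEdges {e | ValidCut T pop I e}).ConnectedComponent) = k ∧
      ∀ c : (T.deleteEdges {e | ValidCut T pop I e}).ConnectedComponent,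
        popSet pop c.supp = I := by
  set S : Finset (Sym2 V) :=
    (Finset.univ : Finset (Sym2 V)).filter (fun e => ValidCut T pop I e) with hSdef
  have hset : {e | ValidCut T pop I e} = (↑S : Set (Sym2 V)) := by
    ext e
    simp [hSdef]
  simp only [hset]
  -- positivity of I
  have hne : Nonempty V := hG.nonempty
  obtain ⟨v0⟩ := hne
  have hpop_univ : 0 < popSet pop Set.univ :=
    lt_of_lt_of_le (hpos v0) (single_le_popSet pop Set.univ v0 (Set.mem_univ v0))
  have hIpos : 0 < I := by
    rcases Nat.eq_zero_or_pos I with h | h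
    · rw [h, Nat.mul_zero] at hI; omega
    · exact h
  -- divisibility of components
  have hdvd : ∀ c : (T.deleteEdges ↑S).ConnectedComponent, I ∣ popSet pop c.supp :=
    pop_dvd T pop I hTree ⟨k, by rw [hI, Nat.mul_comm]⟩ S
      (fun e he => (Finset.mem_filter.mp he).2)
  -- component populations are positive
  have hpopc : ∀ c : (T.deleteEdges ↑S).ConnectedComponent, 0 < popSet pop c.supp := by
    intro c
    induction c using SimpleGraph.ConnectedComponent.ind with
    | _ v =>
      have hv : v ∈ ((T.deleteEdges ↑S).connectedComponentMk v).supp := by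
        simp [ConnectedComponent.mem_supp_iff]
      exact lt_of_lt_of_le (hpos v) (single_le_popSet pop _ v hv)
  have hIle : ∀ c : (T.deleteEdges ↑S).ConnectedComponent, I ≤ popSet pop c.supp :=
    fun c => Nat.le_of_dvd (hpopc c) (hdvd c)
  -- total population identity
  have htotal : popSet pop Set.univ
      = ∑ c ∈ (Finset.univ : Finset ((T.deleteEdges ↑S).ConnectedComponent)),
        popSet pop c.supp := by
    have := sum_comp (T.deleteEdges ↑S) pop Set.univ
      (fun v _ w _ => Set.mem_univ w)
    rw [Finset.filter_true_of_mem (fun c _ => Set.subset_univ _)] at this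
    convert this
  -- lower bound on card
  have hcard_ge : k ≤ Fintype.card (T.deleteEdges ↑S).ConnectedComponent := by
    have := card_comp_ge T hTree S (fun e he => ((Finset.mem_filter.mp he).2).1)
    rw [hcount] at this
    omega
  -- upper bound on card
  have hcard_le : Fintype.card (T.deleteEdges ↑S).ConnectedComponent ≤ k := by
    have hsum_ge : Fintype.card (T.deleteEdges ↑S).ConnectedComponent * I
        ≤ ∑ c ∈ (Finset.univ : Finset ((T.deleteEdges ↑S).ConnectedComponent)),
          popSet pop c.supp := by
      calc Fintype.card (T.deleteEdges ↑S).ConnectedComponent * I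
          = ∑ _c ∈ (Finset.univ : Finset ((T.deleteEdges ↑S).ConnectedComponent)), I := by
            rw [Finset.sum_const, Finset.card_univ, smul_eq_mul]
        _ ≤ _ := Finset.sum_le_sum (fun c _ => hIle c)
    rw [← htotal, hI] at hsum_ge
    exact Nat.le_of_mul_le_mul_right hsum_ge hIpos
  have hcard : Fintype.card (T.deleteEdges ↑S).ConnectedComponent = k :=
    le_antisymm hcard_le hcard_ge
  refine ⟨hcard, ?_⟩
  -- each component has population exactly I
  have hsums : ∑ c ∈ (Finset.univ : Finset ((T.deleteEdges ↑S).ConnectedComponent)), I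
      = ∑ c ∈ (Finset.univ : Finset ((T.deleteEdges ↑S).ConnectedComponent)),
        popSet pop c.supp := by
    rw [← htotal, hI, Finset.sum_const, Finset.card_univ, smul_eq_mul, hcard]
  have := (Finset.sum_eq_sum_iff_of_le (fun c _ => hIle c)).mp hsums
  rw [hset]
  exact fun c => ((this c (Finset.mem_univ c))).symm
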